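/- arXiv:1203.1227 — 3 statements merged into one kernel-verified Lean document; each statement's English description precedes it below -/
import Mathlib

section
/- Consider the process that starts with a positive real width ε₀ and a factor N₀ = 4, and at each step either replaces (ε, N) by (ε/N, N²) (success) or, if N > 4, by (ε, √N) (failure), where failures with N = 4 are impossible because the step with N = 4 always narrows the interval by a factor 4. Then for every target ε > 0 the process reaches a width ≤ ε after finitely many steps. -/
theorem qir_process_terminates
    (ε N : ℕ → ℝ) (hε0 : 0 < ε 0) (hN0 : N 0 = 4)
    (hstep : ∀ n,
      (ε (n + 1) = ε n / N n ∧ N (n + 1) = (N n)^2) ∨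
      (4 < N n ∧ ε (n + 1) = ε n ∧ N (n + 1) = Real.sqrt (N n))) :
    ∀ target : ℝ, 0 < target → ∃ n, ε n ≤ target := by
  -- invariant: ε positive and N of the form 4^(2^k)
  have hinv : ∀ n, 0 < ε n ∧ ∃ k : ℕ, N n = 4 ^ (2 ^ k) := by
    intro n
    induction n with
    | zero => exact ⟨hε0, 0, by simp [hN0]⟩
    | succ n ih =>
      obtain ⟨hεp, k, hk⟩ := ih
      have hNpos : (0:ℝ) < N n := by rw [hk]; positivity
      rcases hstep n with ⟨he, hn⟩ | ⟨h4, he, hn⟩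
      · refine ⟨by rw [he]; positivity, k + 1, ?_⟩
        rw [hn, hk, ← pow_mul, pow_succ, mul_comm]
      · have hk1 : k ≠ 0 := by
          rintro rfl
          rw [hk] at h4; norm_num at h4
        obtain ⟨j, rfl⟩ := Nat.exists_eq_succ_of_ne_zero hk1
        refine ⟨by rw [he]; exact hεp, j, ?_⟩
        rw [hn, hk, pow_succ, pow_mul]
        exact Real.sqrt_sq (by positivity)
  have hN4 : ∀ n, (4:ℝ) ≤ N n := by
    intro n
    obtain ⟨-, k, hk⟩ := hinv n
    rw [hk]
    calc (4:ℝ) = 4 ^ 1 := (pow_one 4).symm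
    _ ≤ 4 ^ (2 ^ k) := pow_le_pow_right₀ (by norm_num) (Nat.one_le_two_pow)
  -- key: from any n, eventually ε drops by a factor 4
  have key : ∀ k n, N n = 4 ^ (2 ^ k) → ∃ m, ε m ≤ ε n / 4 := by
    intro k
    induction k with
    | zero =>
      intro n hk
      rcases hstep n with ⟨he, -⟩ | ⟨h4, -, -⟩
      · exact ⟨n + 1, by rw [he, hk]; norm_num⟩
      · rw [hk] at h4; norm_num at h4
    | succ j ih =>
      intro n hk
      rcases hstep n with ⟨he, -⟩ | ⟨h4, he, hn⟩
      · refine ⟨n + 1, ?_⟩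
        rw [he]
        exact div_le_div_of_nonneg_left (hinv n).1.le (by norm_num) (hN4 n)
      · have hn' : N (n + 1) = 4 ^ (2 ^ j) := by
          rw [hn, hk, pow_succ, pow_mul]
          exact Real.sqrt_sq (by positivity)
        obtain ⟨m, hm⟩ := ih (n + 1) hn'
        exact ⟨m, by rwa [he] at hm⟩
  -- iterate: ε gets below ε 0 / 4^j for every j
  have iter : ∀ j : ℕ, ∃ n, ε n ≤ ε 0 / 4 ^ j := by
    intro j
    induction j with
    | zero => exact ⟨0, by simp⟩
    | succ j ih =>
      obtain ⟨n, hn⟩ := ih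
      obtain ⟨-, k, hk⟩ := hinv n
      obtain ⟨m, hm⟩ := key k n hk
      refine ⟨m, hm.trans ?_⟩
      rw [pow_succ, ← div_div]
      gcongr
  intro target htarget
  obtain ⟨j, hj⟩ := pow_unbounded_of_one_lt (ε 0 / target) (by norm_num : (1:ℝ) < 4)
  obtain ⟨n, hn⟩ := iter j
  refine ⟨n, hn.trans ?_⟩
  rw [div_le_iff₀ (by positivity)]
  have := (div_lt_iff₀ htarget).mp hj
  linarith [mul_comm target ((4:ℝ) ^ j)]
end

section
/- In the QIR process starting from a narrow-enough interval of width ε (ε·C < 1/8) and any refinement factor N ≥ 4 from the set {4^(2^k)}, there are only finitely many failures before the refinement factor becomes small enough, after which every subsequent step succeeds. -/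
theorem qir_eventually_all_success
    (C : ℝ) (hC : 0 < C)
    (ε N : ℕ → ℝ)
    (hnarrow : ε 0 * C < 1/8)
    (hN0 : ∃ k : ℕ, N 0 = 4 ^ (2 ^ k))
    (hstep : ∀ n,
      (N n * ε n * C < 1/2 ∧ ε (n + 1) = ε n / N n ∧ N (n + 1) = (N n)^2) ∨
      (¬ (N n * ε n * C < 1/2) ∧ 4 < N n ∧ ε (n + 1) = ε n ∧
        N (n + 1) = Real.sqrt (N n))) :
    ∃ m, ∀ n ≥ m, N n * ε n * C < 1/2 := by
  set Φ : ℕ → ℝ := fun n => N n * ε n * C with hΦ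
  -- success preserves Φ < 1/2
  have hA : ∀ n, Φ n < 1/2 → Φ (n+1) < 1/2 := by
    intro n hn
    rcases hstep n with ⟨h1, h2, h3⟩ | ⟨h1, _, _, _⟩
    · by_cases hN : N n = 0
      · simp [hΦ, h2, h3, hN]
      · have : Φ (n+1) = Φ n := by
          simp only [hΦ, h2, h3]
          field_simp
        rw [this]; exact hn
    · exact absurd hn h1
  -- if Φ never drops below 1/2 up to n, then Φ halves each step
  have hB : ∀ n, (∀ m, m ≤ n → ¬ Φ m < 1/2) → Φ n ≤ Φ 0 / 2 ^ n := by
    intro n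
    induction n with
    | zero => intro _; simp
    | succ n ih =>
      intro h
      have hprev : Φ n ≤ Φ 0 / 2 ^ n := ih (fun m hm => h m (hm.trans (Nat.le_succ n)))
      have hn2 : ¬ Φ n < 1/2 := h n (Nat.le_succ n)
      rcases hstep n with ⟨h1, _, _⟩ | ⟨h1, h4, h5, h6⟩
      · exact absurd h1 hn2
      · push_neg at hn2
        have hNpos : (0:ℝ) < N n := by linarith
        have hεC : 0 < ε n * C := by nlinarith
        have hsqrt : Real.sqrt (N n) ≤ N n / 2 := by
          rw [show N n / 2 = Real.sqrt ((N n / 2)^2) by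
            rw [Real.sqrt_sq (by linarith)]]
          exact Real.sqrt_le_sqrt (by nlinarith)
        have : Φ (n+1) ≤ Φ n / 2 := by
          simp only [hΦ, h5, h6]
          calc Real.sqrt (N n) * ε n * C ≤ (N n / 2) * (ε n * C) := by
                rw [mul_assoc]
                exact mul_le_mul_of_nonneg_right hsqrt hεC.le
            _ = N n * ε n * C / 2 := by ring
        calc Φ (n+1) ≤ Φ n / 2 := this
          _ ≤ Φ 0 / 2 ^ n / 2 := by linarith
          _ = Φ 0 / 2 ^ (n+1) := by rw [pow_succ]; ring
  -- there is some m with Φ m < 1/2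
  have hex : ∃ m, Φ m < 1/2 := by
    by_contra h
    push_neg at h
    obtain ⟨n, hn⟩ := pow_unbounded_of_one_lt (Φ 0 * 2) (y := (2:ℝ)) one_lt_two
    have h1 : Φ n ≤ Φ 0 / 2 ^ n := hB n (fun m _ => not_lt_of_ge (h m))
    have h2 : (1:ℝ)/2 ≤ Φ n := h n
    have h3 : (0:ℝ) < 2 ^ n := by positivity
    have : Φ 0 / 2 ^ n < 1/2 := by
      rw [div_lt_iff₀ h3]
      linarith
    linarith
  obtain ⟨m, hm⟩ := hex
  refine ⟨m, fun n hn => ?_⟩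
  induction n, hn using Nat.le_induction with
  | base => exact hm
  | succ n _ ih => exact hA n ih
end

section
/- Let f(a), f(b) be approximate values with relative errors at most 2^{-(m+2)} of the true values F(a), F(b), where F(a)·F(b) < 0 and N = 2^m. Then the computed index κ' = round(N·f(a)/(f(a)−f(b))) differs from the exact index κ = round(N·F(a)/(F(a)−F(b))) by at most 1. -/
set_option maxHeartbeats 1000000 in
/-- Key analytic lemma: assuming Fa > 0 > Fb, the two quotients differ by < 1. -/
lemma qir_key (Fa Fb fa fb ε N : ℝ) (hFa : 0 < Fa) (hFb : Fb < 0)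
    (hε0 : 0 < ε) (hε : ε ≤ 1/8) (hNε : N * ε = 1/4) (hN0 : 0 < N)
    (hfa : |fa - Fa| ≤ ε * Fa) (hfb : |fb - Fb| ≤ ε * (-Fb)) :
    |N * fa / (fa - fb) - N * Fa / (Fa - Fb)| < 1 := by
  obtain ⟨hfa1, hfa2⟩ := abs_le.mp hfa
  obtain ⟨hfb1, hfb2⟩ := abs_le.mp hfb
  have h1ε : 0 < 1 - ε := by linarith
  have hfa' : (1 - ε) * Fa ≤ fa := by nlinarith
  have hfb' : fb ≤ (1 - ε) * Fb := by nlinarith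
  have hD0 : 0 < Fa - Fb := by linarith
  have hd' : (1 - ε) * (Fa - Fb) ≤ fa - fb := by nlinarith
  have hd0 : 0 < fa - fb := by nlinarith
  have hprod : 0 < Fa * (-Fb) := mul_pos hFa (by linarith)
  -- bound on the numerator N*(Fa*fb - Fb*fa)
  have e1 : Fa * (fb - Fb) ≤ ε * (Fa * (-Fb)) := by nlinarith
  have e1' : -(ε * (Fa * (-Fb))) ≤ Fa * (fb - Fb) := by nlinarith
  have e2 : (-Fb) * (fa - Fa) ≤ ε * (Fa * (-Fb)) := by nlinarith
  have e2' : -(ε * (Fa * (-Fb))) ≤ (-Fb) * (fa - Fa) := by nlinarith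
  have hub : N * (Fa * fb - Fb * fa) ≤ (1/2) * (Fa * (-Fb)) := by
    have h1 : Fa * fb - Fb * fa ≤ 2 * (ε * (Fa * (-Fb))) := by nlinarith
    have h2 : N * (Fa * fb - Fb * fa) ≤ N * (2 * (ε * (Fa * (-Fb)))) :=
      mul_le_mul_of_nonneg_left h1 hN0.le
    have h3 : N * (2 * (ε * (Fa * (-Fb)))) = (1/2) * (Fa * (-Fb)) := by
      linear_combination (2 * Fa * (-Fb)) * hNε
    linarith
  have hlb : -((1/2) * (Fa * (-Fb))) ≤ N * (Fa * fb - Fb * fa) := by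
    have h1 : -(2 * (ε * (Fa * (-Fb)))) ≤ Fa * fb - Fb * fa := by nlinarith
    have h2 : N * (-(2 * (ε * (Fa * (-Fb))))) ≤ N * (Fa * fb - Fb * fa) :=
      mul_le_mul_of_nonneg_left h1 hN0.le
    have h3 : N * (-(2 * (ε * (Fa * (-Fb))))) = -((1/2) * (Fa * (-Fb))) := by
      linear_combination (-(2 * Fa * (-Fb))) * hNε
    linarith
  -- bound on the denominator
  have hA : 0 ≤ (fa - fb - (1 - ε) * (Fa - Fb)) * (Fa - Fb) :=
    mul_nonneg (by linarith) hD0.le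
  have hB : 0 ≤ (1 - ε) * (Fa + Fb)^2 := mul_nonneg h1ε.le (sq_nonneg _)
  have hden : (1 - ε) * (4 * (Fa * (-Fb))) ≤ (fa - fb) * (Fa - Fb) := by
    linarith [hA, hB]
  have hdenpos : 0 < (fa - fb) * (Fa - Fb) := mul_pos hd0 hD0
  have hden2 : (7/2) * (Fa * (-Fb)) ≤ (fa - fb) * (Fa - Fb) := by nlinarith
  have key : N * fa / (fa - fb) - N * Fa / (Fa - Fb)
      = N * (Fa * fb - Fb * fa) / ((fa - fb) * (Fa - Fb)) := by
    field_simp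
    ring
  rw [key, abs_div, abs_of_pos hdenpos, div_lt_one hdenpos]
  rw [abs_lt]
  constructor <;> nlinarith [hub, hlb, hden2, hprod]

lemma round_close {x y : ℝ} (h : |x - y| < 1) : |round x - round y| ≤ 1 := by
  have h1 := abs_sub_round x
  have h2 := abs_sub_round y
  have h3 : |((round x : ℤ) : ℝ) - ((round y : ℤ) : ℝ)| < 2 := by
    rw [abs_lt] at *
    rw [abs_le] at h1 h2
    constructor <;> linarith
  have h4 : |round x - round y| < 2 := by exact_mod_cast (by push_cast; exact h3 : |((round x - round y : ℤ) : ℝ)| < 2)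
  omega

theorem approximate_index_error
    (Fa Fb fa fb : ℝ) (hsign : Fa * Fb < 0)
    (m : ℕ) (hm : 1 ≤ m) (N : ℝ) (hN : N = 2 ^ m)
    (hfa : |fa - Fa| ≤ 2 ^ (-(m : ℤ) - 2) * |Fa|)
    (hfb : |fb - Fb| ≤ 2 ^ (-(m : ℤ) - 2) * |Fb|) :
    |round (N * fa / (fa - fb)) - round (N * Fa / (Fa - Fb))| ≤ 1 := by
  set ε : ℝ := 2 ^ (-(m : ℤ) - 2) with hεdef
  have hε0 : 0 < ε := zpow_pos (by norm_num) _
  have hε : ε ≤ 1/8 := by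
    have : (-(m : ℤ) - 2) ≤ -3 := by omega
    calc ε ≤ (2:ℝ) ^ (-3 : ℤ) := zpow_le_zpow_right₀ (by norm_num) this
      _ = 1/8 := by norm_num
  have hN0 : 0 < N := by rw [hN]; positivity
  have hNε : N * ε = 1/4 := by
    rw [hN, hεdef, ← zpow_natCast (2:ℝ) m, ← zpow_add₀ (by norm_num : (2:ℝ) ≠ 0)]
    rw [show (m:ℤ) + (-(m:ℤ) - 2) = -2 by ring]
    norm_num
  apply round_close
  rcases mul_neg_iff.mp hsign with ⟨hFa, hFb⟩ | ⟨hFa, hFb⟩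
  · rw [abs_of_pos hFa] at hfa
    rw [abs_of_neg hFb] at hfb
    exact qir_key Fa Fb fa fb ε N hFa hFb hε0 hε hNε hN0 hfa hfb
  · have h := qir_key (-Fa) (-Fb) (-fa) (-fb) ε N (by linarith) (by linarith)
      hε0 hε hNε hN0
      (by rw [show -fa - -Fa = -(fa - Fa) by ring, abs_neg]
          rwa [abs_of_neg hFa] at hfa)
      (by rw [show -fb - -Fb = -(fb - Fb) by ring, abs_neg, neg_neg]
          rwa [abs_of_pos hFb] at hfb)
    have heq : N * (-fa) / (-fa - -fb) - N * (-Fa) / (-Fa - -Fb)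
        = N * fa / (fa - fb) - N * Fa / (Fa - Fb) := by
      rw [show -fa - -fb = -(fa - fb) by ring, show -Fa - -Fb = -(Fa - Fb) by ring]
      rw [mul_neg, neg_div_neg_eq, mul_neg, neg_div_neg_eq]
    rwa [heq] at h
end
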